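/- Let G be a group, A an abelian subgroup of finite index, and B the intersection of all G-conjugates of A. Then B is a normal abelian subgroup of finite index in G, the group ring ℂ[B] is an integral domain when B is torsion-free, and setting S = ℂ[B] \ {0}, the localization S⁻¹ℂ[G] is a finite-dimensional algebra over the field S⁻¹ℂ[B]; hence S⁻¹ℂ[G] is an artinian ring in which every non-zerodivisor is invertible. -/

import Mathlib

/-- The old Mathlib notion (removed since): a monoid is torsion-free if every
non-identity element has infinite order. -/
def Monoid.IsTorsionFree (G : Type*) [Monoid G] : Prop :=
  ∀ g : G, g ≠ 1 → ¬IsOfFinOrder g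

open MonoidAlgebra OreLocalization

theorem aux_uniqueProds {H : Type*} [CommGroup H] (htf : Monoid.IsTorsionFree H) :
    UniqueProds H := by
  haveI htfa : IsAddTorsionFree (Additive H) := IsAddTorsionFree.of_not_isOfFinAddOrder
    (fun g hg hfin => htf g.toMul hg (isOfFinAddOrder_ofMul_iff.mp hfin))
  haveI : NoZeroSMulDivisors ℤ (Additive H) :=
    IsAddTorsionFree.to_noZeroSMulDivisors_int
  set M := Additive H with hM
  letI : Module ℚ (LocalizedModule (nonZeroDivisors ℤ) M) :=
    Module.compHom _ ((FractionRing.algEquiv ℤ ℚ).symm.toAlgHom.toRingHom)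
  let F : AddHom M (LocalizedModule (nonZeroDivisors ℤ) M) :=
    ⟨fun m => LocalizedModule.mk m 1, by
      intro a b
      rw [LocalizedModule.mk_add_mk]
      simp⟩
  have hinj : Function.Injective F := by
    intro a b hab
    obtain ⟨u, hu⟩ := LocalizedModule.mk_eq.mp hab
    simp only [one_smul] at hu
    have h2 : (u : ℤ) • (a - b) = 0 := by
      rw [smul_sub, ← Submonoid.smul_def, ← Submonoid.smul_def, hu, sub_self]
    rcases smul_eq_zero.mp h2 with h | h
    · exact absurd h (nonZeroDivisors.ne_zero u.2)
    · exact sub_eq_zero.mp h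
  haveI : UniqueSums M := UniqueSums.of_injective_addHom F hinj inferInstance
  haveI : UniqueProds (Multiplicative M) := inferInstance
  exact UniqueProds.of_injective_mulHom
    (⟨fun x => Multiplicative.ofAdd (Additive.ofMul x), fun _ _ => rfl⟩ :
      H →ₙ* Multiplicative M)
    (fun _ _ h => h) inferInstance


theorem aux_decomp {G : Type*} [Group G] (B : Subgroup G) [hN : B.Normal] [Fintype (G ⧸ B)]
    (x : MonoidAlgebra ℂ G) :
    ∃ c : G ⧸ B → MonoidAlgebra ℂ B,
      x = ∑ q : G ⧸ B,
        MonoidAlgebra.mapDomainRingHom ℂ B.subtype (c q) *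
          MonoidAlgebra.single (Quotient.out q) 1 := by
  classical
  induction x using MonoidAlgebra.induction_linear with
  | zero => exact ⟨0, by simp⟩
  | add f g hf hg =>
    obtain ⟨c1, hc1⟩ := hf
    obtain ⟨c2, hc2⟩ := hg
    refine ⟨c1 + c2, ?_⟩
    simp only [Pi.add_apply, map_add, add_mul, Finset.sum_add_distrib]
    rw [← hc1, ← hc2]
  | single u a =>
    set q0 : G ⧸ B := QuotientGroup.mk u with hq0
    have hmem : u⁻¹ * Quotient.out q0 ∈ B := by
      rw [← QuotientGroup.eq]
      exact (Quotient.out_eq q0).symm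
    have hb : u * (Quotient.out q0)⁻¹ ∈ B := by
      have h2 : (Quotient.out q0)⁻¹ * u ∈ B := by
        have := B.inv_mem hmem
        simpa using this
      have h3 := hN.conj_mem _ h2 u
      have : u * ((Quotient.out q0)⁻¹ * u) * u⁻¹ = u * (Quotient.out q0)⁻¹ := by group
      rwa [this] at h3
    refine ⟨fun q => if q = q0 then MonoidAlgebra.single (⟨_, hb⟩ : B) a else 0, ?_⟩
    rw [Finset.sum_eq_single q0]
    · have : MonoidAlgebra.mapDomainRingHom ℂ B.subtype
          (MonoidAlgebra.single (⟨_, hb⟩ : B) a) =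
          MonoidAlgebra.single (u * (Quotient.out q0)⁻¹) a := by
        simp [MonoidAlgebra.mapDomainRingHom_apply, Finsupp.mapDomain_single]
      rw [show (fun q => if q = q0 then MonoidAlgebra.single (⟨_, hb⟩ : B) a else 0) q0 = MonoidAlgebra.single (⟨_, hb⟩ : B) a from if_pos rfl, this, MonoidAlgebra.single_mul_single]
      simp [mul_assoc]
    · intro q _ hq
      simp [if_neg hq]
    · intro h
      exact absurd (Finset.mem_univ q0) h


theorem aux_conj {G : Type*} [Group G] (B : Subgroup G) [hN : B.Normal] (g : G)
    (s : MonoidAlgebra ℂ B) :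
    MonoidAlgebra.single g (1 : ℂ) * MonoidAlgebra.mapDomainRingHom ℂ B.subtype s =
      MonoidAlgebra.mapDomainRingHom ℂ B.subtype
        (MonoidAlgebra.mapDomainRingHom ℂ (MulAut.conjNormal g).toMonoidHom s) *
        MonoidAlgebra.single g 1 := by
  induction s using MonoidAlgebra.induction_linear with
  | zero => simp
  | add f h hf hh => simp only [map_add, mul_add, add_mul, hf, hh]
  | single b a =>
    have e1 : MonoidAlgebra.mapDomainRingHom ℂ (MulAut.conjNormal g).toMonoidHom
        (MonoidAlgebra.single b a) = MonoidAlgebra.single ((MulAut.conjNormal g) b) a := by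
      simp [MonoidAlgebra.mapDomainRingHom_apply, Finsupp.mapDomain_single]
    have e2 : MonoidAlgebra.mapDomainRingHom ℂ B.subtype (MonoidAlgebra.single b a) =
        MonoidAlgebra.single (b : G) a := by
      simp [MonoidAlgebra.mapDomainRingHom_apply, Finsupp.mapDomain_single]
    have e3 : MonoidAlgebra.mapDomainRingHom ℂ B.subtype
        (MonoidAlgebra.single ((MulAut.conjNormal g) b) a) =
        MonoidAlgebra.single (((MulAut.conjNormal g) b : B) : G) a := by
      simp [MonoidAlgebra.mapDomainRingHom_apply, Finsupp.mapDomain_single]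
    rw [e2, e1, e3, MonoidAlgebra.single_mul_single, MonoidAlgebra.single_mul_single,
      one_mul, mul_one]
    congr 1
    rw [MulAut.conjNormal_apply]
    group

set_option maxHeartbeats 1000000 in
set_option synthInstance.maxHeartbeats 400000 in
theorem aux_loc {G : Type*} [Group G] (B : Subgroup G) [hN : B.Normal] [Fintype (G ⧸ B)]
    (hcomm : ∀ x y : B, x * y = y * x) (htf : Monoid.IsTorsionFree B)
    (R : Type) [Ring R] (ι : MonoidAlgebra ℂ G →+* R)
    (hinj : Function.Injective ι)
    (hS : ∀ s : MonoidAlgebra ℂ B, s ≠ 0 →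
      IsUnit (ι (MonoidAlgebra.mapDomainRingHom ℂ B.subtype s)))
    (hfrac : ∀ r : R, ∃ (x : MonoidAlgebra ℂ G) (s : MonoidAlgebra ℂ B), s ≠ 0 ∧
      r * ι (MonoidAlgebra.mapDomainRingHom ℂ B.subtype s) = ι x) :
    (∃ (m : ℕ) (v : Fin m → R), ∀ r : R,
      ∃ (c : Fin m → MonoidAlgebra ℂ B) (s : MonoidAlgebra ℂ B), s ≠ 0 ∧
        r * ι (MonoidAlgebra.mapDomainRingHom ℂ B.subtype s) =
          ∑ i, ι (MonoidAlgebra.mapDomainRingHom ℂ B.subtype (c i)) * v i) ∧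
    IsArtinianRing R ∧
    (∀ r : R,
      ((∀ y : R, r * y = 0 → y = 0) ∧ (∀ y : R, y * r = 0 → y = 0)) →
        IsUnit r) := by
  classical
  letI : CommGroup B := { (inferInstance : Group B) with mul_comm := hcomm }
  haveI hup : UniqueProds B := aux_uniqueProds htf
  haveI : IsDomain (MonoidAlgebra ℂ B) := NoZeroDivisors.to_isDomain _
  set D := MonoidAlgebra ℂ B with hD
  let j : D →+* MonoidAlgebra ℂ G := MonoidAlgebra.mapDomainRingHom ℂ B.subtype
  let g0 : D →+* R := ι.comp j
  have hjinj : Function.Injective j := by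
    intro a b h
    exact MonoidAlgebra.mapDomain_injective (Subgroup.subtype_injective B)
      (by exact h)
  have hg0 : Function.Injective g0 := hinj.comp hjinj
  have hne : ∀ s : nonZeroDivisors D, (s : D) ≠ 0 := fun s => nonZeroDivisors.coe_ne_zero s
  let fS : ↥(nonZeroDivisors D) →* Rˣ :=
    { toFun := fun s => (hS s (hne s)).unit
      map_one' := Units.ext (by rw [IsUnit.unit_spec]; exact g0.map_one)
      map_mul' := fun s t => Units.ext (by
        rw [Units.val_mul, IsUnit.unit_spec, IsUnit.unit_spec, IsUnit.unit_spec,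
          Submonoid.coe_mul, map_mul, map_mul]) }
  have hfS : ∀ s : ↥(nonZeroDivisors D), (fS s : R) = g0 s := fun s => IsUnit.unit_spec _
  let K := OreLocalization (nonZeroDivisors D) D
  letI : DivisionRing K := inferInstance
  haveI : IsArtinianRing K := DivisionRing.instIsArtinianRing
  let f : K →+* R := OreLocalization.universalHom g0 fS (fun s => (hfS s).symm)
  have hfnum : ∀ d : D, f (OreLocalization.numeratorHom d) = g0 d := fun d =>
    OreLocalization.universalHom_commutes g0 fS (fun s => (hfS s).symm)
  letI : Module K R := Module.compHom R f
  have hsmul : ∀ (k : K) (r : R), k • r = f k * r := fun _ _ => rfl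
  letI : IsScalarTower K R R :=
    ⟨fun k r r' => by rw [smul_eq_mul, smul_eq_mul, hsmul, hsmul, mul_assoc]⟩
  let u : G ⧸ B → R := fun q => ι (MonoidAlgebra.single (Quotient.out q) 1)
  have key : ∀ r : R, ∃ (c : G ⧸ B → D) (s : D), s ≠ 0 ∧
      r * ι (j s) = ∑ q : G ⧸ B, ι (j (c q)) * u q := by
    intro r
    obtain ⟨x, s, hs, heq⟩ := hfrac r
    obtain ⟨c, hc⟩ := aux_decomp B x
    refine ⟨c, s, hs, ?_⟩
    rw [heq, hc, map_sum]
    simp only [map_mul]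
    rfl
  have hmain1 : ∃ (m : ℕ) (v : Fin m → R), ∀ r : R,
      ∃ (c : Fin m → MonoidAlgebra ℂ B) (s : MonoidAlgebra ℂ B), s ≠ 0 ∧
        r * ι (MonoidAlgebra.mapDomainRingHom ℂ B.subtype s) =
          ∑ i, ι (MonoidAlgebra.mapDomainRingHom ℂ B.subtype (c i)) * v i := by
    refine ⟨Fintype.card (G ⧸ B), fun i => u ((Fintype.equivFin (G ⧸ B)).symm i), ?_⟩
    intro r
    obtain ⟨c, s, hs, he⟩ := key r
    refine ⟨fun i => c ((Fintype.equivFin (G ⧸ B)).symm i), s, hs, ?_⟩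
    rw [he]
    exact (Equiv.sum_comp (Fintype.equivFin (G ⧸ B)).symm
      (fun q => ι (j (c q)) * u q)).symm
  have hspan : Submodule.span K (Set.range u) = ⊤ := by
    rw [eq_top_iff]
    rintro r -
    obtain ⟨c, s, hs, he⟩ := key r
    set sq : G ⧸ B → D := fun q => MonoidAlgebra.mapDomainRingHom ℂ
        (MulAut.conjNormal (Quotient.out q)).toMonoidHom s with hsqdef
    have hsq : ∀ q : G ⧸ B, sq q ≠ 0 := by
      intro q h0
      apply hs
      have hinj2 : Function.Injective (MonoidAlgebra.mapDomainRingHom ℂ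
          (MulAut.conjNormal (Quotient.out q)).toMonoidHom : D →+* D) := by
        intro a b h
        exact MonoidAlgebra.mapDomain_injective (MulAut.conjNormal (Quotient.out q)).injective
          (by simpa [MonoidAlgebra.mapDomainRingHom_apply] using h)
      exact hinj2 (by rw [map_zero]; exact h0)
    have hcom : ∀ q : G ⧸ B, u q * g0 s = g0 (sq q) * u q := by
      intro q
      have h1 := congrArg ι (aux_conj B (Quotient.out q) s)
      simp only [map_mul] at h1
      exact h1
    let w : G ⧸ B → Rˣ := fun q => fS ⟨sq q, mem_nonZeroDivisors_of_ne_zero (hsq q)⟩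
    let w0 : Rˣ := fS ⟨s, mem_nonZeroDivisors_of_ne_zero hs⟩
    have hw : ∀ q, (w q : R) = g0 (sq q) := fun q => hfS _
    have hw0 : (w0 : R) = g0 s := hfS _
    have hjs : ι (j s) = (w0 : R) := hw0.symm
    have hr1 : r = (∑ q : G ⧸ B, ι (j (c q)) * u q) * ↑w0⁻¹ := by
      rw [← he, hjs, mul_assoc, Units.mul_inv, mul_one]
    have hterm : ∀ q : G ⧸ B, ι (j (c q)) * u q * ↑w0⁻¹ =
        ((c q /ₒ ⟨sq q, mem_nonZeroDivisors_of_ne_zero (hsq q)⟩ : K)) • u q := by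
      intro q
      have h3 : u q * (w0 : R) = (w q : R) * u q := by rw [hw0, hw]; exact hcom q
      have h2 : (↑(w q)⁻¹ : R) * u q = u q * ↑w0⁻¹ := by
        calc (↑(w q)⁻¹ : R) * u q
            = ↑(w q)⁻¹ * (u q * ↑w0 * ↑w0⁻¹) := by rw [mul_assoc, Units.mul_inv, mul_one]
          _ = ↑(w q)⁻¹ * (↑(w q) * u q * ↑w0⁻¹) := by rw [h3]
          _ = u q * ↑w0⁻¹ := by rw [← mul_assoc, ← mul_assoc, Units.inv_mul, one_mul]
      have h5 : Commute (ι (j (c q))) ((w q : R)) := by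
        show ι (j (c q)) * (w q : R) = (w q : R) * ι (j (c q))
        rw [hw]
        show g0 (c q) * g0 (sq q) = g0 (sq q) * g0 (c q)
        rw [← map_mul, ← map_mul, mul_comm]
      have h4 : ι (j (c q)) * (↑(w q)⁻¹ : R) = ↑(w q)⁻¹ * ι (j (c q)) :=
        h5.units_inv_right.eq
      calc ι (j (c q)) * u q * ↑w0⁻¹
          = ι (j (c q)) * (↑(w q)⁻¹ * u q) := by rw [mul_assoc, h2]
        _ = (ι (j (c q)) * ↑(w q)⁻¹) * u q := by rw [mul_assoc]
        _ = (↑(w q)⁻¹ * ι (j (c q))) * u q := by rw [h4]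
        _ = f (c q /ₒ ⟨sq q, mem_nonZeroDivisors_of_ne_zero (hsq q)⟩) * u q := by
              rw [OreLocalization.universalHom_apply]; rfl
        _ = ((c q /ₒ ⟨sq q, mem_nonZeroDivisors_of_ne_zero (hsq q)⟩ : K)) • u q :=
              (hsmul _ _).symm
    have hre : r = ∑ q : G ⧸ B,
        ((c q /ₒ ⟨sq q, mem_nonZeroDivisors_of_ne_zero (hsq q)⟩ : K)) • u q := by
      rw [hr1, Finset.sum_mul]
      exact Finset.sum_congr rfl (fun q _ => hterm q)
    rw [hre]
    exact Submodule.sum_mem _ (fun q _ =>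
      Submodule.smul_mem _ _ (Submodule.subset_span ⟨q, rfl⟩))
  haveI hfin : Module.Finite K R :=
    ⟨⟨Finset.univ.image u, by
      rw [Finset.coe_image, Finset.coe_univ, Set.image_univ]; exact hspan⟩⟩
  haveI hartK : IsArtinian K R := isArtinian_of_fg_of_artinian'
  haveI hartR : IsArtinianRing R :=
    ⟨(Submodule.restrictScalarsEmbedding K R R).wellFounded hartK.wf⟩
  refine ⟨hmain1, hartR, ?_⟩
  rintro r ⟨hl, hr⟩
  let ρ : R →ₗ[K] R :=
    { toFun := fun y => y * r
      map_add' := fun a b => add_mul a b r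
      map_smul' := fun k y => by
        simp only [RingHom.id_apply]
        rw [hsmul, hsmul, mul_assoc] }
  have hρ : Function.Injective ρ := by
    intro a b h
    have h2 : (a - b) * r = 0 := by
      rw [sub_mul, show a * r = b * r from h, sub_self]
    exact sub_eq_zero.mp (hr _ h2)
  obtain ⟨y, hy⟩ := IsArtinian.surjective_of_injective_endomorphism ρ hρ 1
  have hy' : y * r = 1 := hy
  have hry : r * y = 1 := by
    have h2 : (r * y - 1) * r = 0 := by
      rw [sub_mul, one_mul, mul_assoc, hy', mul_one, sub_self]
    exact sub_eq_zero.mp (hr _ h2)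
  exact ⟨⟨r, y, hry, hy'⟩, rfl⟩


/-- Let `G` be a group, `A` an abelian subgroup of finite index,
and `B = ∩_{g} gAg⁻¹` the intersection of all `G`-conjugates of `A` (the normal
core of `A`).  Then `B` is a normal abelian subgroup of finite index in `G`;
the group ring `ℂ[B]` is an integral domain when `B` is torsion-free; and,
setting `S = ℂ[B] \ {0}`, the localization `S⁻¹ℂ[G]` (formalized as any ring
`R` with an injective hom `ι : ℂ[G] → R` inverting `S` and consisting of
fractions) is a finite-dimensional algebra over the field `S⁻¹ℂ[B]` (it is
spanned over the fractions of `ℂ[B]` by finitely many elements), hence is an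
artinian ring in which every non-zerodivisor is invertible. -/
theorem localized_group_ring_artinian
    {G : Type*} [Group G] (A : Subgroup G)
    (hA : ∀ x y : A, x * y = y * x) (hAfin : A.FiniteIndex)
    (B : Subgroup G) (hB : B = A.normalCore) :
    B.Normal ∧ (∀ x y : B, x * y = y * x) ∧ B.FiniteIndex ∧
    (Monoid.IsTorsionFree B → IsDomain (MonoidAlgebra ℂ B)) ∧
    (Monoid.IsTorsionFree B →
      ∀ (R : Type) [Ring R], ∀ ι : MonoidAlgebra ℂ G →+* R,
        Function.Injective ι →
        (∀ s : MonoidAlgebra ℂ B, s ≠ 0 →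
          IsUnit (ι (MonoidAlgebra.mapDomainRingHom ℂ B.subtype s))) →
        (∀ r : R, ∃ (x : MonoidAlgebra ℂ G) (s : MonoidAlgebra ℂ B), s ≠ 0 ∧
          r * ι (MonoidAlgebra.mapDomainRingHom ℂ B.subtype s) = ι x) →
        (∃ (m : ℕ) (v : Fin m → R), ∀ r : R,
          ∃ (c : Fin m → MonoidAlgebra ℂ B) (s : MonoidAlgebra ℂ B), s ≠ 0 ∧
            r * ι (MonoidAlgebra.mapDomainRingHom ℂ B.subtype s) =
              ∑ i, ι (MonoidAlgebra.mapDomainRingHom ℂ B.subtype (c i)) * v i) ∧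
        IsArtinianRing R ∧
        (∀ r : R,
          ((∀ y : R, r * y = 0 → y = 0) ∧ (∀ y : R, y * r = 0 → y = 0)) →
            IsUnit r)) := by
  subst hB
  haveI := hAfin
  have hab : ∀ x y : A.normalCore, x * y = y * x := by
    intro x y
    have hx : (x : G) ∈ A := Subgroup.normalCore_le A x.2
    have hy : (y : G) ∈ A := Subgroup.normalCore_le A y.2
    have h1 := hA ⟨(x : G), hx⟩ ⟨(y : G), hy⟩
    have h2 : (x : G) * (y : G) = (y : G) * (x : G) := congrArg Subtype.val h1
    exact Subtype.ext h2
  haveI hFI : A.normalCore.FiniteIndex := A.finiteIndex_normalCore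
  refine ⟨Subgroup.normalCore_normal A, hab, hFI, ?_, ?_⟩
  · intro htf
    letI : CommGroup A.normalCore :=
      { (inferInstance : Group A.normalCore) with mul_comm := hab }
    haveI : UniqueProds A.normalCore := aux_uniqueProds htf
    exact NoZeroDivisors.to_isDomain _
  · intro htf R _ ι hinj hS hfrac
    letI : Fintype (G ⧸ A.normalCore) := Fintype.ofFinite _
    exact aux_loc A.normalCore hab htf R ι hinj hS hfrac
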